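/- Let 𝔅 be a bornology with closed base on a metric space X. The following are equivalent: (1) X has the 𝔅ˢ-Hurewicz property; (2) X satisfies S_fin(𝒪_{𝔅ˢ}, 𝒪_{𝔅ˢ}^{gp}); (3) ONE has no winning strategy in the game G_fin(𝒪_{𝔅ˢ}, 𝒪_{𝔅ˢ}^{gp}). -/

import Mathlib

open Set Metric Filter

/-- A bornology on a metric space: an ideal of subsets covering `X`. -/
structure BornologyOn (X : Type*) [MetricSpace X] where
  sets : Set (Set X)
  union_mem : ∀ {A B : Set X}, A ∈ sets → B ∈ sets → A ∪ B ∈ sets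
  subset_mem : ∀ {A B : Set X}, A ∈ sets → B ⊆ A → B ∈ sets
  covers : ∀ x : X, ∃ A ∈ sets, x ∈ A

variable {X : Type*} [MetricSpace X]

/-- `𝔅` has a closed base: a cofinal subfamily consisting of closed sets. -/
def HasClosedBase (𝔅 : BornologyOn X) : Prop :=
  ∃ base ⊆ 𝔅.sets, (∀ C ∈ base, IsClosed C) ∧ ∀ A ∈ 𝔅.sets, ∃ C ∈ base, A ⊆ C

/-- The `δ`-enlargement `B^δ = ⋃_{x ∈ B} S(x, δ)`. -/
def enlarge (B : Set X) (δ : ℝ) : Set X := ⋃ x ∈ B, ball x δ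

/-- A `𝔅ˢ`-cover: `X ∉ 𝒰` and every `B ∈ 𝔅` has `B^δ ⊆ U` for some `U ∈ 𝒰`, `δ > 0`. -/
def IsBCover (𝔅 : BornologyOn X) (𝒰 : Set (Set X)) : Prop :=
  univ ∉ 𝒰 ∧ ∀ B ∈ 𝔅.sets, ∃ U ∈ 𝒰, ∃ δ > 0, enlarge B δ ⊆ U

/-- An open `𝔅ˢ`-cover. -/
def IsOpenBCover (𝔅 : BornologyOn X) (𝒰 : Set (Set X)) : Prop :=
  (∀ U ∈ 𝒰, IsOpen U) ∧ (∀ x : X, ∃ U ∈ 𝒰, x ∈ U) ∧ IsBCover 𝔅 𝒰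

/-- A `γ_{𝔅ˢ}`-cover (set form): infinite family of open sets such that for each `B ∈ 𝔅`
all but finitely many members contain some enlargement of `B`. -/
def IsGammaBCover (𝔅 : BornologyOn X) (𝒰 : Set (Set X)) : Prop :=
  𝒰.Infinite ∧ (∀ U ∈ 𝒰, IsOpen U) ∧
    ∀ B ∈ 𝔅.sets, {U ∈ 𝒰 | ¬ ∃ δ > 0, enlarge B δ ⊆ U}.Finite

/-- A `γ_{𝔅ˢ}`-cover given as a sequence `{Uₙ}`: infinite, open, and for each `B ∈ 𝔅`
there are `n₀` and `δₙ > 0` with `B^{δₙ} ⊆ Uₙ` for all `n ≥ n₀`. -/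
def IsGammaBSeq (𝔅 : BornologyOn X) (U : ℕ → Set X) : Prop :=
  (Set.range U).Infinite ∧ (∀ n, IsOpen (U n)) ∧
    ∀ B ∈ 𝔅.sets, ∃ n₀, ∀ n ≥ n₀, ∃ δ > 0, enlarge B δ ⊆ U n

/-- A `γ`-cover: infinite family of open sets, every point in all but finitely many members. -/
def IsGammaCover (𝒰 : Set (Set X)) : Prop :=
  𝒰.Infinite ∧ (∀ U ∈ 𝒰, IsOpen U) ∧ ∀ x : X, {U ∈ 𝒰 | x ∉ U}.Finite

/-- An open cover of `X`. -/
def IsOpenCover (𝒰 : Set (Set X)) : Prop :=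
  (∀ U ∈ 𝒰, IsOpen U) ∧ ∀ x : X, ∃ U ∈ 𝒰, x ∈ U

/-- The family `𝒪_{𝔅ˢ}` of countable open `𝔅ˢ`-covers. -/
def OBs (𝔅 : BornologyOn X) : Set (Set (Set X)) :=
  {𝒰 | 𝒰.Countable ∧ IsOpenBCover 𝔅 𝒰}

/-- The family `Γ_{𝔅ˢ}` of countable `γ_{𝔅ˢ}`-covers. -/
def GBs (𝔅 : BornologyOn X) : Set (Set (Set X)) :=
  {𝒰 | 𝒰.Countable ∧ IsGammaBCover 𝔅 𝒰}

/-- The family `𝒪` of countable open covers. -/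
def Ocov (X : Type*) [MetricSpace X] : Set (Set (Set X)) :=
  {𝒰 | 𝒰.Countable ∧ IsOpenCover 𝒰}

/-- The selection principle `S₁(𝒜, ℬ)`. -/
def S1 (𝒜 ℬ : Set (Set (Set X))) : Prop :=
  ∀ 𝒰 : ℕ → Set (Set X), (∀ n, 𝒰 n ∈ 𝒜) →
    ∃ sel : ℕ → Set X, (∀ n, sel n ∈ 𝒰 n) ∧ Set.range sel ∈ ℬ

/-- The selection principle `S_fin(𝒜, ℬ)`. -/
def Sfin (𝒜 ℬ : Set (Set (Set X))) : Prop :=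
  ∀ 𝒰 : ℕ → Set (Set X), (∀ n, 𝒰 n ∈ 𝒜) →
    ∃ 𝒱 : ℕ → Set (Set X), (∀ n, 𝒱 n ⊆ 𝒰 n ∧ (𝒱 n).Finite) ∧ (⋃ n, 𝒱 n) ∈ ℬ

/-- The selection principle `U_fin(𝒜, ℬ)`. -/
def Ufin (𝒜 ℬ : Set (Set (Set X))) : Prop :=
  ∀ 𝒰 : ℕ → Set (Set X), (∀ n, 𝒰 n ∈ 𝒜) →
    ∃ 𝒱 : ℕ → Set (Set X), (∀ n, 𝒱 n ⊆ 𝒰 n ∧ (𝒱 n).Finite) ∧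
      ((Set.range fun n => ⋃₀ 𝒱 n) ∈ ℬ ∨ ∃ n, ⋃₀ 𝒱 n = univ)

/-- ONE has a winning strategy in `G₁(𝒜, ℬ)`. -/
def OneWinsG1 (𝒜 ℬ : Set (Set (Set X))) : Prop :=
  ∃ σ : List (Set X) → Set (Set X),
    (∀ h, σ h ∈ 𝒜) ∧
    ∀ play : ℕ → Set X,
      (∀ n, play n ∈ σ (List.ofFn fun i : Fin n => play i.1)) →
      Set.range play ∉ ℬ

/-- ONE has a winning strategy in `G_fin(𝒜, ℬ)`. -/
def OneWinsGfin (𝒜 ℬ : Set (Set (Set X))) : Prop :=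
  ∃ σ : List (Set (Set X)) → Set (Set X),
    (∀ h, σ h ∈ 𝒜) ∧
    ∀ play : ℕ → Set (Set X),
      (∀ n, play n ⊆ σ (List.ofFn fun i : Fin n => play i.1) ∧ (play n).Finite) →
      (⋃ n, play n) ∉ ℬ

/-- The winning condition in the `𝔅ˢ`-Hurewicz game / property: every `B ∈ 𝔅` is
eventually `δ`-enlarged into some member of `𝒱ₙ`. -/
def HurSel (𝔅 : BornologyOn X) (𝒱 : ℕ → Set (Set X)) : Prop :=
  ∀ B ∈ 𝔅.sets, ∃ n₀, ∀ n ≥ n₀, ∃ δ > 0, ∃ U ∈ 𝒱 n, enlarge B δ ⊆ U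

/-- The strong `𝔅`-Hurewicz property. -/
def BsHurewicz (𝔅 : BornologyOn X) : Prop :=
  ∀ 𝒰 : ℕ → Set (Set X), (∀ n, 𝒰 n ∈ OBs 𝔅) →
    ∃ 𝒱 : ℕ → Set (Set X), (∀ n, 𝒱 n ⊆ 𝒰 n ∧ (𝒱 n).Finite) ∧ HurSel 𝔅 𝒱

/-- ONE has a winning strategy in the `𝔅ˢ`-Hurewicz game. -/
def OneWinsHurewicz (𝔅 : BornologyOn X) : Prop :=
  ∃ σ : List (Set (Set X)) → Set (Set X),
    (∀ h, σ h ∈ OBs 𝔅) ∧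
    ∀ play : ℕ → Set (Set X),
      (∀ n, play n ⊆ σ (List.ofFn fun i : Fin n => play i.1) ∧ (play n).Finite) →
      ¬ HurSel 𝔅 play

/-- A `𝔅ˢ`-groupable cover. -/
def BsGroupable (𝔅 : BornologyOn X) (𝒰 : Set (Set X)) : Prop :=
  ∃ 𝒢 : ℕ → Set (Set X), (∀ n, (𝒢 n).Finite) ∧
    (∀ m n, m ≠ n → Disjoint (𝒢 m) (𝒢 n)) ∧ (⋃ n, 𝒢 n) = 𝒰 ∧ HurSel 𝔅 𝒢

/-- The family `𝒪_{𝔅ˢ}^{gp}` of `𝔅ˢ`-groupable open covers. -/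
def OBsgp (𝔅 : BornologyOn X) : Set (Set (Set X)) :=
  {𝒰 | IsOpenCover 𝒰 ∧ BsGroupable 𝔅 𝒰}

/-- The basic `τ_𝔅ˢ` neighbourhood `[B, ε]ˢ(f)` in `C(X)`. -/
def sball (f : C(X, ℝ)) (B : Set X) (ε : ℝ) : Set C(X, ℝ) :=
  {g | ∃ δ > 0, ∀ x ∈ enlarge B δ, |f x - g x| < ε}

/-- The topology `τ_𝔅ˢ` of strong uniform convergence on `𝔅` on `C(X)`. -/
def tauBs (𝔅 : BornologyOn X) : TopologicalSpace C(X, ℝ) :=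
  TopologicalSpace.generateFrom
    {S | ∃ f : C(X, ℝ), ∃ B ∈ 𝔅.sets, ∃ ε > 0, S = sball f B ε}

/-- Countable `T`-tightness of a topological space. -/
def CountableTTightness {Y : Type*} (t : TopologicalSpace Y) : Prop :=
  ∀ ρ : Cardinal.{0}, ρ.IsRegular → Cardinal.aleph0 < ρ →
    ∀ A : Ordinal.{0} → Set Y, (∀ α β, α ≤ β → A α ⊆ A β) →
      (∀ α, α < ρ.ord → @IsClosed _ t (A α)) →
      @IsClosed _ t (⋃ α ∈ {α | α < ρ.ord}, A α)


section Aux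

open Classical in
lemma singleton_mem_sets (𝔅 : BornologyOn X) (x : X) : {x} ∈ 𝔅.sets := by
  obtain ⟨A, hA, hx⟩ := 𝔅.covers x
  exact 𝔅.subset_mem hA (by simpa using hx)

lemma enlarge_mono {B B' : Set X} {δ δ' : ℝ} (hB : B ⊆ B') (hδ : δ ≤ δ') :
    enlarge B δ ⊆ enlarge B' δ' := by
  intro y hy
  simp only [enlarge, mem_iUnion] at hy ⊢
  obtain ⟨x, hx, hxy⟩ := hy
  exact ⟨x, hB hx, lt_of_lt_of_le hxy hδ⟩

lemma mem_enlarge {B : Set X} {x : X} {δ : ℝ} (hδ : 0 < δ) (hx : x ∈ B) :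
    x ∈ enlarge B δ := by
  simp only [enlarge, mem_iUnion]
  exact ⟨x, hx, by simpa using hδ⟩

lemma union_biUnion_mem {ι : Type*} (𝔅 : BornologyOn X) (s : Finset ι) (f : ι → Set X)
    (hf : ∀ i ∈ s, f i ∈ 𝔅.sets) {B : Set X} (hB : B ∈ 𝔅.sets) :
    B ∪ ⋃ i ∈ s, f i ∈ 𝔅.sets := by
  classical
  revert hf
  induction s using Finset.induction_on with
  | empty => intro _; simpa using hB
  | @insert a s ha ih =>
      intro hf
      rw [Finset.set_biUnion_insert]
      have heq : B ∪ (f a ∪ ⋃ i ∈ s, f i) = (B ∪ ⋃ i ∈ s, f i) ∪ f a := by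
        rw [Set.union_comm (f a), Set.union_assoc]
      rw [heq]
      exact 𝔅.union_mem (ih (fun i hi => hf i (Finset.mem_insert_of_mem hi)))
        (hf a (Finset.mem_insert_self a s))

/-- The set of witnesses of `B` in `𝒰`. -/
def Wit (𝒰 : Set (Set X)) (B : Set X) : Set (Set X) :=
  {U ∈ 𝒰 | ∃ δ > 0, enlarge B δ ⊆ U}

/-- Lemma A: in any open `𝔅ˢ`-cover, every `B ∈ 𝔅` has infinitely many witnesses. -/
lemma wit_infinite {𝔅 : BornologyOn X} {𝒰 : Set (Set X)} (h𝒰 : IsOpenBCover 𝔅 𝒰)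
    {B : Set X} (hB : B ∈ 𝔅.sets) : (Wit 𝒰 B).Infinite := by
  classical
  by_contra hinf
  rw [Set.not_infinite] at hinf
  have hfin := hinf
  -- claim: some witness of B is a witness of B ∪ B' for every B'
  have claim : ∃ U ∈ Wit 𝒰 B, ∀ B' ∈ 𝔅.sets, U ∈ Wit 𝒰 (B ∪ B') := by
    by_contra hcl
    push_neg at hcl
    have hch : ∀ U : Set X, ∃ B', U ∈ Wit 𝒰 B → B' ∈ 𝔅.sets ∧ U ∉ Wit 𝒰 (B ∪ B') := by
      intro U
      by_cases hU : U ∈ Wit 𝒰 B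
      · obtain ⟨B', hB'1, hB'2⟩ := hcl U hU
        exact ⟨B', fun _ => ⟨hB'1, hB'2⟩⟩
      · exact ⟨B, fun h => absurd h hU⟩
    choose Bf hBf using hch
    set F := hfin.toFinset with hF
    set Bstar := B ∪ ⋃ U ∈ F, Bf U with hBstar
    have hBstarmem : Bstar ∈ 𝔅.sets := by
      refine union_biUnion_mem 𝔅 F Bf (fun U hU => ?_) hB
      exact (hBf U (by rwa [Set.Finite.mem_toFinset] at hU)).1
    obtain ⟨U, hU𝒰, δ, hδ, hsub⟩ := h𝒰.2.2.2 Bstar hBstarmem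
    have hUW : U ∈ Wit 𝒰 B :=
      ⟨hU𝒰, δ, hδ, (enlarge_mono Set.subset_union_left le_rfl).trans hsub⟩
    have hUF : U ∈ F := by rwa [Set.Finite.mem_toFinset]
    have hnot := (hBf U hUW).2
    apply hnot
    refine ⟨hU𝒰, δ, hδ, (enlarge_mono ?_ le_rfl).trans hsub⟩
    refine Set.union_subset Set.subset_union_left ?_
    exact le_trans (Set.subset_biUnion_of_mem hUF) Set.subset_union_right
  obtain ⟨U₀, hU₀, hall⟩ := claim
  have : U₀ = univ := by
    rw [Set.eq_univ_iff_forall]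
    intro x
    obtain ⟨_, δ, hδ, hsub⟩ := hall {x} (singleton_mem_sets 𝔅 x)
    exact hsub (mem_enlarge hδ (by simp))
  exact h𝒰.2.2.1 (this ▸ hU₀.1)

lemma exists_bound_of_finite_subset_range {α : Type*} {g : ℕ → α} {S : Set α}
    (hS : S.Finite) (hsub : S ⊆ range g) : ∃ b, S ⊆ g '' Set.Iic b := by
  refine Set.Finite.induction_on (motive := fun s _ => s ⊆ range g → ∃ b, s ⊆ g '' Set.Iic b)
    S hS (fun _ => ⟨0, by simp⟩) ?_ hsub
  intro a s _ _ ih hsub'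
  obtain ⟨b, hb⟩ := ih (subset_trans (Set.subset_insert a s) hsub')
  obtain ⟨j, hj⟩ := hsub' (Set.mem_insert a s)
  refine ⟨max b j, Set.insert_subset ⟨j, by simp, hj⟩ (hb.trans (Set.image_mono ?_))⟩
  exact Set.Iic_subset_Iic.2 (le_max_left b j)

end Aux

section Grp

variable {𝔅 : BornologyOn X}

lemma tail_mem_OBs {u : ℕ → Set X} (hinj : Function.Injective u)
    (hran : range u = 𝒰) (h𝒰 : 𝒰 ∈ OBs 𝔅) (k : ℕ) :
    u '' Set.Ici k ∈ OBs 𝔅 := by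
  obtain ⟨hcnt, hop, hcov, hnuniv, hwit⟩ := h𝒰
  have hW : ∀ B ∈ 𝔅.sets, ∃ i ≥ k, ∃ δ > 0, enlarge B δ ⊆ u i := by
    intro B hB
    have hinf : (Wit 𝒰 B).Infinite := wit_infinite ⟨hop, hcov, hnuniv, hwit⟩ hB
    have hsubr : Wit 𝒰 B ⊆ range u := by rw [hran]; exact fun U hU => hU.1
    have hpre : (u ⁻¹' (Wit 𝒰 B)).Infinite := hinf.preimage hsubr
    obtain ⟨i, hiP, hik⟩ : ∃ i, u i ∈ Wit 𝒰 B ∧ k ≤ i := by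
      by_contra hno
      push_neg at hno
      exact hpre (Set.Finite.subset (Set.finite_Iio k) (fun i hi => hno i hi))
    exact ⟨i, hik, hiP.2⟩
  refine ⟨(Set.to_countable _).image u, fun U hU => ?_, fun x => ?_, fun h => ?_, fun B hB => ?_⟩
  · obtain ⟨i, _, rfl⟩ := hU
    exact hop _ (hran ▸ Set.mem_range_self i)
  · obtain ⟨i, hik, δ, hδ, hsub⟩ := hW {x} (singleton_mem_sets 𝔅 x)
    exact ⟨u i, ⟨i, hik, rfl⟩, hsub (mem_enlarge hδ (by simp))⟩
  · obtain ⟨i, _, hiu⟩ := h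
    exact hnuniv (hran ▸ (hiu ▸ Set.mem_range_self i))
  · obtain ⟨i, hik, δ, hδ, hsub⟩ := hW B hB
    exact ⟨u i, ⟨i, hik, rfl⟩, δ, hδ, hsub⟩

/-- Lemma B: under the Hurewicz property, every infinite countable open `𝔅ˢ`-cover
is `𝔅ˢ`-groupable. -/
lemma groupable_of_obs (hH : BsHurewicz 𝔅) {𝒰 : Set (Set X)}
    (h𝒰 : 𝒰 ∈ OBs 𝔅) (hinf : 𝒰.Infinite) : BsGroupable 𝔅 𝒰 := by
  classical
  haveI := h𝒰.1.to_subtype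
  haveI := hinf.to_subtype
  obtain ⟨d⟩ := nonempty_denumerable ↥𝒰
  let ev : ℕ ≃ ↥𝒰 := (Denumerable.eqv ↥𝒰).symm
  set u : ℕ → Set X := fun n => (ev n : Set X) with hu
  have hinj : Function.Injective u := Subtype.val_injective.comp ev.injective
  have hran : range u = 𝒰 := by
    rw [hu]
    have : range (fun n => (ev n : Set X)) = Subtype.val '' range ev := by
      rw [← Set.range_comp]; rfl
    rw [this, Equiv.range_eq_univ, Set.image_univ, Subtype.range_coe]
  -- apply Hurewicz to tails
  obtain ⟨𝒱, h𝒱, hSel⟩ := hH (fun k => u '' Set.Ici k)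
    (fun k => tail_mem_OBs hinj hran h𝒰 k)
  -- index bounds for the finite selections
  have hNex : ∀ j, ∃ N, ∀ i, u i ∈ 𝒱 j → i < N := by
    intro j
    have hfin : (u ⁻¹' 𝒱 j).Finite :=
      Set.Finite.preimage (hinj.injOn) ((h𝒱 j).2)
    obtain ⟨N, hN⟩ := hfin.bddAbove
    exact ⟨N + 1, fun i hi => Nat.lt_succ_of_le (hN hi)⟩
  choose N hN using hNex
  set k : ℕ → ℕ := fun j => Nat.rec 0 (fun _ ih => max (ih + 1) (N ih)) j with hk
  have hksucc : ∀ j, k (j + 1) = max (k j + 1) (N (k j)) := fun j => rfl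
  have hmono : StrictMono k := strictMono_nat_of_lt_succ (fun j => by
    rw [hksucc]; exact lt_of_lt_of_le (Nat.lt_succ_self _) (le_max_left _ _))
  refine ⟨fun j => u '' Set.Ico (k j) (k (j + 1)), fun j => (Set.finite_Ico _ _).image u,
    ?_, ?_, ?_⟩
  · intro m n hmn
    rw [Set.disjoint_left]
    rintro U ⟨i, hi, rfl⟩ ⟨i', hi', hii'⟩
    have : i' = i := hinj hii'
    subst this
    rcases lt_or_gt_of_ne hmn with h | h
    · exact absurd hi'.1 (not_le.2 (lt_of_lt_of_le hi.2 (hmono.monotone h)))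
    · exact absurd hi.1 (not_le.2 (lt_of_lt_of_le hi'.2 (hmono.monotone h)))
  · rw [← hran]
    ext U
    constructor
    · intro hU
      obtain ⟨j, hj⟩ := Set.mem_iUnion.1 hU
      obtain ⟨i, _, rfl⟩ := hj
      exact Set.mem_range_self i
    · rintro ⟨i, rfl⟩
      have hex : ∃ j, i < k (j + 1) := ⟨i, lt_of_lt_of_le (Nat.lt_succ_self i)
        (hmono.le_apply)⟩
      refine Set.mem_iUnion.2 ⟨Nat.find hex, ⟨i, ⟨?_, Nat.find_spec hex⟩, rfl⟩⟩
      cases hf : Nat.find hex with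
      | zero => exact Nat.zero_le i
      | succ j' => exact not_lt.1 (Nat.find_min hex (by omega))
  · intro B hB
    obtain ⟨m₀, hm₀⟩ := hSel B hB
    refine ⟨m₀, fun j hj => ?_⟩
    have hkj : m₀ ≤ k j := le_trans hj hmono.le_apply
    obtain ⟨δ, hδ, U, hU, hsub⟩ := hm₀ (k j) hkj
    obtain ⟨i, hik, rfl⟩ := (h𝒱 (k j)).1 hU
    have hlt : i < N (k j) := hN (k j) i hU
    refine ⟨δ, hδ, u i, ⟨i, ⟨hik, ?_⟩, rfl⟩, hsub⟩
    rw [hksucc]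
    exact lt_of_lt_of_le hlt (le_max_right _ _)

end Grp

section Impl

variable {𝔅 : BornologyOn X}

lemma hurewicz_to_sfin (hne : Nonempty X) (hH : BsHurewicz 𝔅) :
    Sfin (OBs 𝔅) (OBsgp 𝔅) := by
  intro 𝒰 h𝒰
  obtain ⟨𝒱, h𝒱, hSel⟩ := hH 𝒰 h𝒰
  refine ⟨𝒱, h𝒱, ?_⟩
  have hOBs : (⋃ n, 𝒱 n) ∈ OBs 𝔅 := by
    refine ⟨Set.countable_iUnion (fun n => ((h𝒱 n).2).countable), fun U hU => ?_,
      fun x => ?_, fun h => ?_, fun B hB => ?_⟩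
    · obtain ⟨n, hn⟩ := Set.mem_iUnion.1 hU
      exact (h𝒰 n).2.1 U ((h𝒱 n).1 hn)
    · obtain ⟨n₀, hn₀⟩ := hSel {x} (singleton_mem_sets 𝔅 x)
      obtain ⟨δ, hδ, U, hU, hsub⟩ := hn₀ n₀ le_rfl
      exact ⟨U, Set.mem_iUnion.2 ⟨n₀, hU⟩, hsub (mem_enlarge hδ (by simp))⟩
    · obtain ⟨n, hn⟩ := Set.mem_iUnion.1 h
      exact (h𝒰 n).2.2.2.1 ((h𝒱 n).1 hn)
    · obtain ⟨n₀, hn₀⟩ := hSel B hB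
      obtain ⟨δ, hδ, U, hU, hsub⟩ := hn₀ n₀ le_rfl
      exact ⟨U, Set.mem_iUnion.2 ⟨n₀, hU⟩, δ, hδ, hsub⟩
  obtain ⟨x₀⟩ := hne
  have hinf : (⋃ n, 𝒱 n).Infinite :=
    Set.Infinite.mono (fun U hU => hU.1) (wit_infinite hOBs.2 (singleton_mem_sets 𝔅 x₀))
  exact ⟨⟨hOBs.2.1, hOBs.2.2.1⟩, groupable_of_obs hH hOBs hinf⟩

lemma nowin_to_sfin (hnw : ¬ OneWinsGfin (OBs 𝔅) (OBsgp 𝔅)) :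
    Sfin (OBs 𝔅) (OBsgp 𝔅) := by
  by_contra hS
  apply hnw
  unfold Sfin at hS
  push_neg at hS
  obtain ⟨𝒰, h𝒰, hbad⟩ := hS
  refine ⟨fun h => 𝒰 h.length, fun h => h𝒰 _, ?_⟩
  intro play hplay
  apply hbad
  intro n
  have h := hplay n
  simpa only [List.length_ofFn] using h

lemma sfin_to_hurewicz (hS : Sfin (OBs 𝔅) (OBsgp 𝔅)) : BsHurewicz 𝔅 := by
  classical
  intro 𝒰 h𝒰
  -- the covers of finite intersections
  set 𝒲 : ℕ → Set (Set X) := fun n =>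
    (fun g : Fin (n + 1) → Set X => ⋂ j, g j) '' (Set.pi univ fun j : Fin (n + 1) => 𝒰 j.1)
    with h𝒲def
  have h𝒲 : ∀ n, 𝒲 n ∈ OBs 𝔅 := by
    intro n
    refine ⟨Set.Countable.image (Set.countable_univ_pi (fun j : Fin (n + 1) => (h𝒰 j.1).1)) _,
      ?_, ?_, ?_, ?_⟩
    · rintro U ⟨g, hg, rfl⟩
      exact isOpen_iInter_of_finite (fun j => (h𝒰 j.1).2.1 _ (hg j (Set.mem_univ j)))
    · intro x
      have hx : ∀ j : Fin (n + 1), ∃ U, U ∈ 𝒰 j.1 ∧ x ∈ U := by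
        intro j
        obtain ⟨U, hU, hxU⟩ := (h𝒰 j.1).2.2.1 x
        exact ⟨U, hU, hxU⟩
      choose g hg1 hg2 using hx
      exact ⟨⋂ j, g j, ⟨g, fun j _ => hg1 j, rfl⟩, Set.mem_iInter.2 hg2⟩
    · rintro ⟨g, hg, hEq⟩
      have hEq' : ⋂ j, g j = univ := hEq
      have h0 : g 0 = univ :=
        Set.eq_univ_of_univ_subset (hEq' ▸ Set.iInter_subset g 0)
      have hmem := hg 0 (Set.mem_univ _)
      rw [h0] at hmem
      exact (h𝒰 0).2.2.2.1 (by simpa using hmem)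
    · intro B hB
      have hx : ∀ j : Fin (n + 1), ∃ U, U ∈ 𝒰 j.1 ∧ ∃ δ > 0, enlarge B δ ⊆ U := by
        intro j
        obtain ⟨U, hU, δ, hδ, hsub⟩ := (h𝒰 j.1).2.2.2.2 B hB
        exact ⟨U, hU, δ, hδ, hsub⟩
      choose g hg1 δf hδf hsubf using hx
      set δ := Finset.univ.inf' Finset.univ_nonempty δf with hδdef
      have hδpos : 0 < δ := (Finset.lt_inf'_iff Finset.univ_nonempty).2 (fun j _ => hδf j)
      refine ⟨⋂ j, g j, ⟨g, fun j _ => hg1 j, rfl⟩, δ, hδpos, ?_⟩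
      refine Set.subset_iInter (fun j => ?_)
      exact (enlarge_mono (le_refl B) (Finset.inf'_le δf (Finset.mem_univ j))).trans (hsubf j)
  obtain ⟨𝒱, h𝒱, hOC, 𝒢, h𝒢f, h𝒢d, h𝒢u, h𝒢sel⟩ := hS 𝒲 h𝒲
  -- choose, for each member of the selection, a witnessing round and components
  have hkey : ∀ W : Set X, ∃ (mw : ℕ) (gw : ℕ → Set X), W ∈ (⋃ k, 𝒱 k) →
      W ∈ 𝒱 mw ∧ ∀ j ≤ mw, gw j ∈ 𝒰 j ∧ W ⊆ gw j := by
    intro W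
    by_cases h : W ∈ ⋃ k, 𝒱 k
    · obtain ⟨m, hm⟩ := Set.mem_iUnion.1 h
      obtain ⟨g, hg, hEq⟩ := (h𝒱 m).1 hm
      refine ⟨m, fun j => if hj : j < m + 1 then g ⟨j, hj⟩ else ∅, fun _ => ⟨hm, ?_⟩⟩
      intro j hj
      have hEq' : ⋂ i, g i = W := hEq
      have hjlt : j < m + 1 := Nat.lt_succ_of_le hj
      simp only [dif_pos hjlt]
      exact ⟨by simpa using hg ⟨j, hjlt⟩ (Set.mem_univ _),
        hEq' ▸ Set.iInter_subset g ⟨j, hjlt⟩⟩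
    · exact ⟨0, fun _ => ∅, fun h' => absurd h' h⟩
  choose mw gw hmw using hkey
  -- the groups eventually avoid the first n selections
  have hKex : ∀ n : ℕ, ∃ K, ∀ k, K ≤ k → ∀ W ∈ 𝒢 k, W ∉ ⋃ m ∈ Set.Iio n, 𝒱 m := by
    intro n
    set S : Set (Set X) := ⋃ m ∈ Set.Iio n, 𝒱 m with hSdef
    have hSfin : S.Finite := Set.Finite.biUnion (Set.finite_Iio n) (fun m _ => (h𝒱 m).2)
    set bad : Set ℕ := {k | ∃ W, W ∈ 𝒢 k ∧ W ∈ S} with hbaddef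
    have hch : ∀ k, ∃ W, k ∈ bad → W ∈ 𝒢 k ∧ W ∈ S := by
      intro k
      by_cases hk : k ∈ bad
      · obtain ⟨W, h1, h2⟩ := hk
        exact ⟨W, fun _ => ⟨h1, h2⟩⟩
      · exact ⟨∅, fun h => absurd h hk⟩
    choose F hF using hch
    have hinj : Set.InjOn F bad := by
      intro a ha b hb hab
      by_contra hne
      have h1 := (hF a ha).1
      have h2 := (hF b hb).1
      rw [hab] at h1
      exact Set.disjoint_left.1 (h𝒢d a b hne) ((hab ▸ (hF a ha).1)) h2
    have hbadfin : bad.Finite := by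
      refine Set.Finite.of_finite_image (hSfin.subset ?_) hinj
      rintro W ⟨k, hk, rfl⟩
      exact (hF k hk).2
    obtain ⟨K, hK⟩ := hbadfin.bddAbove
    refine ⟨K + 1, fun k hk W hW1 hW2 => ?_⟩
    have : k ∈ bad := ⟨W, hW1, hW2⟩
    have := hK this
    omega
  choose K hK using hKex
  set kk : ℕ → ℕ := fun n => max n (K n) with hkkdef
  -- membership of groups in the union of selections
  have h𝒢sub : ∀ k, 𝒢 k ⊆ ⋃ m, 𝒱 m := by
    intro k
    rw [← h𝒢u]
    exact Set.subset_iUnion 𝒢 k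
  have hmwge : ∀ n, ∀ W ∈ 𝒢 (kk n), n ≤ mw W := by
    intro n W hW
    have hWU : W ∈ ⋃ m, 𝒱 m := h𝒢sub _ hW
    by_contra hlt
    push_neg at hlt
    exact hK n (kk n) (le_max_right n (K n)) W hW
      (Set.mem_iUnion.2 ⟨mw W, Set.mem_iUnion.2 ⟨hlt, (hmw W hWU).1⟩⟩)
  refine ⟨fun n => (fun W => gw W n) '' 𝒢 (kk n), fun n => ⟨?_, (h𝒢f _).image _⟩, ?_⟩
  · rintro U ⟨W, hW, rfl⟩
    exact ((hmw W (h𝒢sub _ hW)).2 n (hmwge n W hW)).1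
  · intro B hB
    obtain ⟨k₀, hk₀⟩ := h𝒢sel B hB
    refine ⟨k₀, fun n hn => ?_⟩
    obtain ⟨δ, hδ, W, hW, hsub⟩ := hk₀ (kk n) (le_trans hn (le_max_left n (K n)))
    exact ⟨δ, hδ, gw W n, ⟨W, hW, rfl⟩,
      hsub.trans ((hmw W (h𝒢sub _ hW)).2 n (hmwge n W hW)).2⟩


lemma hurewicz_to_nowin (hne : Nonempty X) (hH : BsHurewicz 𝔅) :
    ¬ OneWinsGfin (OBs 𝔅) (OBsgp 𝔅) := by
  classical
  rintro ⟨σ, hσ, hwin⟩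
  obtain ⟨x₀⟩ := hne
  -- enumerate each of ONE's covers
  have hse : ∀ h : List (Set (Set X)), ∃ e : ℕ → Set X, σ h = range e := by
    intro h
    obtain ⟨U, hU, _⟩ := (hσ h).2.2.1 x₀
    exact (hσ h).1.exists_eq_range ⟨U, hU⟩
  choose e he using hse
  -- the history corresponding to a reversed list of index bounds
  set Hist : List ℕ → List (Set (Set X)) :=
    fun s => List.rec ([] : List (Set (Set X)))
      (fun m _ ih => ih ++ [e ih '' Set.Iic m]) s with hHist
  have hHistCons : ∀ m s, Hist (m :: s) = Hist s ++ [e (Hist s) '' Set.Iic m] :=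
    fun _ _ => rfl
  -- apply the Hurewicz property to all covers in the countable tree
  obtain ⟨𝒱, h𝒱, hSel⟩ := hH
    (fun n => σ (Hist (Denumerable.ofNat (List ℕ) n))) (fun n => hσ _)
  -- bounds so that the selections are contained in initial segments
  have hb : ∀ s : List ℕ, ∃ b, 𝒱 (Encodable.encode s) ⊆ e (Hist s) '' Set.Iic b := by
    intro s
    have h1 := (h𝒱 (Encodable.encode s)).1
    rw [Denumerable.ofNat_encode, he] at h1
    exact exists_bound_of_finite_subset_range ((h𝒱 (Encodable.encode s)).2) h1
  choose bnd hbnd using hb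
  -- the recursively defined branch
  set R : ℕ → List ℕ := fun n => Nat.rec [] (fun _ ih => bnd ih :: ih) n with hR
  have hRsucc : ∀ n, R (n + 1) = bnd (R n) :: R n := fun _ => rfl
  set play : ℕ → Set (Set X) := fun n => e (Hist (R n)) '' Set.Iic (bnd (R n)) with hplaydef
  have hofFn : ∀ n, (List.ofFn fun i : Fin n => play i.1) = Hist (R n) := by
    intro n
    induction n with
    | zero => rfl
    | succ n ih =>
        rw [List.ofFn_succ']
        rw [hRsucc, hHistCons, ← ih]
        simp only [List.concat_eq_append, Fin.coe_castSucc, Fin.val_last]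
        rw [ih]
  have hlegal : ∀ n, play n ⊆ σ (List.ofFn fun i : Fin n => play i.1) ∧ (play n).Finite := by
    intro n
    rw [hofFn, he]
    exact ⟨Set.image_subset_range _ _, (Set.finite_Iic _).image _⟩
  have hcontain : ∀ n, 𝒱 (Encodable.encode (R n)) ⊆ play n := fun n => hbnd (R n)
  have hRlen : ∀ n, (R n).length = n := by
    intro n
    induction n with
    | zero => rfl
    | succ n ih => rw [hRsucc]; simp [ih]
  have hIinj : Function.Injective (fun n => Encodable.encode (R n)) := by
    intro a b hab
    have : R a = R b := Encodable.encode_injective hab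
    have := congrArg List.length this
    rwa [hRlen, hRlen] at this
  have hbig : ∀ m₀ : ℕ, ∃ n, m₀ ≤ Encodable.encode (R n) := by
    intro m₀
    by_contra hno
    push_neg at hno
    obtain ⟨a, b, hab, heq⟩ := Finite.exists_ne_map_eq_of_infinite
      (fun n : ℕ => (⟨Encodable.encode (R n), hno n⟩ : Fin m₀))
    exact hab (hIinj (by simpa using congrArg Fin.val heq))
  have hsubσ : ∀ n, play n ⊆ σ (Hist (R n)) := by
    intro n
    rw [he]
    exact Set.image_subset_range _ _
  -- every B has a witness in the outcome
  have hwitB : ∀ B ∈ 𝔅.sets, ∃ U ∈ ⋃ n, play n, ∃ δ > 0, enlarge B δ ⊆ U := by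
    intro B hB
    obtain ⟨m₀, hm₀⟩ := hSel B hB
    obtain ⟨n, hn⟩ := hbig m₀
    obtain ⟨δ, hδ, U, hU, hsub⟩ := hm₀ (Encodable.encode (R n)) hn
    have hUp : U ∈ play n := hcontain n hU
    exact ⟨U, Set.mem_iUnion.2 ⟨n, hUp⟩, δ, hδ, hsub⟩
  have hOBs : (⋃ n, play n) ∈ OBs 𝔅 := by
    refine ⟨Set.countable_iUnion (fun n => ((hlegal n).2).countable), fun U hU => ?_,
      fun x => ?_, fun h => ?_, fun B hB => hwitB B hB⟩
    · obtain ⟨n, hn⟩ := Set.mem_iUnion.1 hU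
      exact (hσ (Hist (R n))).2.1 U (hsubσ n hn)
    · obtain ⟨U, hU, δ, hδ, hsub⟩ := hwitB {x} (singleton_mem_sets 𝔅 x)
      exact ⟨U, hU, hsub (mem_enlarge hδ (by simp))⟩
    · obtain ⟨n, hn⟩ := Set.mem_iUnion.1 h
      exact (hσ (Hist (R n))).2.2.2.1 (hsubσ n hn)
  have hinf : (⋃ n, play n).Infinite :=
    Set.Infinite.mono (fun U hU => hU.1) (wit_infinite hOBs.2 (singleton_mem_sets 𝔅 x₀))
  exact hwin play hlegal ⟨⟨hOBs.2.1, hOBs.2.2.1⟩, groupable_of_obs hH hOBs hinf⟩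

end Impl

theorem stmt16 (𝔅 : BornologyOn X) (hcb : HasClosedBase 𝔅) :
    (BsHurewicz 𝔅 ↔ Sfin (OBs 𝔅) (OBsgp 𝔅)) ∧
    (BsHurewicz 𝔅 ↔ ¬ OneWinsGfin (OBs 𝔅) (OBsgp 𝔅)) := by
  by_cases hne : Nonempty X
  · exact ⟨⟨hurewicz_to_sfin hne, sfin_to_hurewicz⟩,
      ⟨hurewicz_to_nowin hne, fun hnw => sfin_to_hurewicz (nowin_to_sfin hnw)⟩⟩
  · -- the space is empty
    haveI : IsEmpty X := not_nonempty_iff.1 hne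
    have hEmp : ∀ 𝒰 ∈ OBs 𝔅, ∀ B ∈ 𝔅.sets, False := by
      intro 𝒰 h𝒰 B hB
      obtain ⟨U, hU, _⟩ := h𝒰.2.2.2.2 B hB
      have : U = univ := Subsingleton.elim U univ
      exact h𝒰.2.2.2.1 (this ▸ hU)
    have hgp : ∀ 𝒰 ∈ OBs 𝔅, (∅ : Set (Set X)) ∈ OBsgp 𝔅 := by
      intro 𝒰 h𝒰
      refine ⟨⟨fun U hU => absurd hU (Set.notMem_empty U), fun x => isEmptyElim x⟩,
        fun _ => ∅, fun _ => Set.finite_empty, fun _ _ _ => Set.disjoint_empty _,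
        by simp, fun B hB => absurd (hEmp 𝒰 h𝒰 B hB) not_false⟩
    have hH : BsHurewicz 𝔅 := by
      intro 𝒰 h𝒰
      exact ⟨fun _ => ∅, fun n => ⟨Set.empty_subset _, Set.finite_empty⟩,
        fun B hB => absurd (hEmp (𝒰 0) (h𝒰 0) B hB) not_false⟩
    have hS : Sfin (OBs 𝔅) (OBsgp 𝔅) := by
      intro 𝒰 h𝒰
      refine ⟨fun _ => ∅, fun n => ⟨Set.empty_subset _, Set.finite_empty⟩, ?_⟩
      have : (⋃ _ : ℕ, (∅ : Set (Set X))) = ∅ := by simp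
      rw [this]
      exact hgp (𝒰 0) (h𝒰 0)
    have hnw : ¬ OneWinsGfin (OBs 𝔅) (OBsgp 𝔅) := by
      rintro ⟨σ, hσmem, hwin⟩
      refine hwin (fun _ => ∅) (fun n => ⟨Set.empty_subset _, Set.finite_empty⟩) ?_
      have : (⋃ _ : ℕ, (∅ : Set (Set X))) = ∅ := by simp
      rw [this]
      exact hgp (σ []) (hσmem [])
    exact ⟨⟨fun _ => hS, fun _ => hH⟩, ⟨fun _ => hnw, fun _ => hH⟩⟩
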